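/- arXiv:1605.06976 — 7 statements merged into one kernel-verified Lean document; each statement's English description precedes it below -/
import Mathlib

section
/- Let d, N be positive integers, let G be a subgroup of the permutation group of Fin N, let B ⊆ G be a finite subset with nonnegative real weights w_π for π ∈ B, and suppose ρ_I : ℝ → Matrix is differentiable and satisfies dρ_I/dt = Σ_{π∈B} w_π (U_π ρ_I(t) U_π* − ρ_I(t)) for all t, where * denotes conjugate transpose. Then the symmetric average t ↦ (1/|G|) Σ_{σ∈G} U_σ ρ_I(t) U_σ* is constant in t; equivalently, its derivative is zero for all t. -/
open Matrix
open scoped Classical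

/-- The `d^N × d^N` permutation matrix associated with a permutation `π` of the `N` sites:
its `(f, g)` entry is `1` if `g = f ∘ π` and `0` otherwise. -/
noncomputable def permMatrix (d N : ℕ) (π : Equiv.Perm (Fin N)) :
    Matrix (Fin N → Fin d) (Fin N → Fin d) ℂ :=
  Matrix.of fun f g => if g = f ∘ π then 1 else 0

attribute [local instance] Matrix.frobeniusNormedAddCommGroup Matrix.frobeniusNormedSpace
attribute [local instance] Matrix.frobeniusNormedRing Matrix.frobeniusNormedAlgebra

lemma permMatrix_mul (d N : ℕ) (σ π : Equiv.Perm (Fin N)) :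
    permMatrix d N σ * permMatrix d N π = permMatrix d N (σ * π) := by
  ext f h
  simp only [permMatrix, Matrix.mul_apply, Matrix.of_apply]
  rw [Finset.sum_eq_single (f ∘ σ)]
  · simp only [Equiv.Perm.coe_mul, if_true, one_mul, Function.comp_assoc]
    split_ifs <;> simp_all [Function.comp_def]
  · intro g _ hg
    rw [if_neg hg, zero_mul]
  · intro h; exact absurd (Finset.mem_univ _) h

lemma permMatrix_conjTranspose (d N : ℕ) (π : Equiv.Perm (Fin N)) :
    (permMatrix d N π)ᴴ = permMatrix d N π⁻¹ := by
  ext f g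
  simp only [permMatrix, Matrix.conjTranspose_apply, Matrix.of_apply]
  have : f = g ∘ π ↔ g = f ∘ ⇑π⁻¹ := by
    constructor
    · intro h; subst h; ext x; simp
    · intro h; subst h; ext x; simp
  simp only [this]
  split <;> simp

lemma sum_conj_invariant (d N : ℕ) (G : Subgroup (Equiv.Perm (Fin N)))
    (ρ : Matrix (Fin N → Fin d) (Fin N → Fin d) ℂ) {π : Equiv.Perm (Fin N)} (hπ : π ∈ G) :
    (∑ σ : G, permMatrix d N (σ : Equiv.Perm (Fin N)) *
        (permMatrix d N π * ρ * (permMatrix d N π)ᴴ) *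
        (permMatrix d N (σ : Equiv.Perm (Fin N)))ᴴ)
      = ∑ σ : G, permMatrix d N (σ : Equiv.Perm (Fin N)) * ρ *
        (permMatrix d N (σ : Equiv.Perm (Fin N)))ᴴ := by
  have key : ∀ σ : G, permMatrix d N (σ : Equiv.Perm (Fin N)) *
      (permMatrix d N π * ρ * (permMatrix d N π)ᴴ) *
      (permMatrix d N (σ : Equiv.Perm (Fin N)))ᴴ
      = permMatrix d N (((σ * ⟨π, hπ⟩ : G) : Equiv.Perm (Fin N))) * ρ *
        (permMatrix d N (((σ * ⟨π, hπ⟩ : G) : Equiv.Perm (Fin N))))ᴴ := by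
    intro σ
    simp only [Subgroup.coe_mul]
    rw [permMatrix_conjTranspose, permMatrix_conjTranspose, permMatrix_conjTranspose,
      _root_.mul_inv_rev, ← permMatrix_mul, ← permMatrix_mul]
    simp only [mul_assoc]
  simp only [key]
  exact Equiv.sum_comp (Equiv.mulRight (⟨π, hπ⟩ : G))
    (fun σ : G => permMatrix d N (σ : Equiv.Perm (Fin N)) * ρ *
      (permMatrix d N (σ : Equiv.Perm (Fin N)))ᴴ)

/-- If `ρ_I` evolves by `dρ_I/dt = Σ_{π ∈ B} w_π (U_π ρ_I U_π† - ρ_I)` with `B ⊆ G` and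
nonnegative weights, then the symmetric average `(1/|G|) Σ_{σ ∈ G} U_σ ρ_I(t) U_σ†` is a
conserved quantity: its time derivative vanishes for all `t`. -/
theorem symmetric_average_conserved
    (d N : ℕ) (hd : 0 < d) (hN : 0 < N)
    (G : Subgroup (Equiv.Perm (Fin N)))
    (B : Finset (Equiv.Perm (Fin N))) (hB : ∀ π ∈ B, π ∈ G)
    (w : Equiv.Perm (Fin N) → ℝ) (hw : ∀ π ∈ B, 0 ≤ w π)
    (ρI : ℝ → Matrix (Fin N → Fin d) (Fin N → Fin d) ℂ)
    (hρI : ∀ t : ℝ, HasDerivAt ρI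
      (∑ π ∈ B, w π • (permMatrix d N π * ρI t * (permMatrix d N π)ᴴ - ρI t)) t) :
    ∀ t : ℝ, HasDerivAt
      (fun s : ℝ => ((Nat.card G : ℂ))⁻¹ •
        ∑ σ : G, permMatrix d N (σ : Equiv.Perm (Fin N)) * ρI s *
          (permMatrix d N (σ : Equiv.Perm (Fin N)))ᴴ)
      0 t := by
  intro t
  set D := ∑ π ∈ B, w π • (permMatrix d N π * ρI t * (permMatrix d N π)ᴴ - ρI t) with hDdef
  have h1 : HasDerivAt (fun s => ∑ σ : G,
      permMatrix d N (σ : Equiv.Perm (Fin N)) * ρI s *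
        (permMatrix d N (σ : Equiv.Perm (Fin N)))ᴴ)
      (∑ σ : G, permMatrix d N (σ : Equiv.Perm (Fin N)) * D *
        (permMatrix d N (σ : Equiv.Perm (Fin N)))ᴴ) t := by
    apply HasDerivAt.fun_sum
    intro σ _
    exact ((hρI t).const_mul _).mul_const _
  have h2 : (∑ σ : G, permMatrix d N (σ : Equiv.Perm (Fin N)) * D *
      (permMatrix d N (σ : Equiv.Perm (Fin N)))ᴴ) = 0 := by
    have expand : ∀ σ : G, permMatrix d N (σ : Equiv.Perm (Fin N)) * D *
        (permMatrix d N (σ : Equiv.Perm (Fin N)))ᴴ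
        = ∑ π ∈ B, w π • (permMatrix d N (σ : Equiv.Perm (Fin N)) *
            (permMatrix d N π * ρI t * (permMatrix d N π)ᴴ) *
            (permMatrix d N (σ : Equiv.Perm (Fin N)))ᴴ
          - permMatrix d N (σ : Equiv.Perm (Fin N)) * ρI t *
            (permMatrix d N (σ : Equiv.Perm (Fin N)))ᴴ) := by
      intro σ
      simp only [hDdef, Finset.mul_sum, Finset.sum_mul, mul_smul_comm, smul_mul_assoc,
        mul_sub, sub_mul]
    simp only [expand]
    rw [Finset.sum_comm]
    refine Finset.sum_eq_zero fun π hπB => ?_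
    rw [← Finset.smul_sum, Finset.sum_sub_distrib,
      sum_conj_invariant d N G (ρI t) (hB π hπB), sub_self, smul_zero]
  have h3 := h1.const_smul (((Nat.card G : ℂ))⁻¹)
  rw [h2, smul_zero] at h3
  exact h3
end

section
/- Let w123, w12 be strictly positive real numbers and let L_U be the 3×3 matrix [[w123 + w12, −w12, −w123], [−w123 − w12, w123 + w12, 0], [0, −w123, w123]] regarded as a complex matrix. Set A₁ = (3/2)·w123 + w12 and B₁ = 4·w12² − 3·w123². Then every nonzero complex eigenvalue μ of L_U satisfies Re(μ) ≥ A₁ − (1/2)·Real.sqrt(max(B₁, 0)); that is, the convergence rate to the synchronous state over the directed graph G₁(3) is λ_Synch = A₁ − (1/2)·√(max(B₁,0)). -/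
open Matrix

/-- Every nonzero complex eigenvalue of the weighted Laplacian of the directed graph `G₁(3)`
(one directed 3-cycle with weight `w123 > 0` and one transposition edge with weight `w12 > 0`)
has real part at least `A₁ − √(max B₁ 0) / 2`, where `A₁ = (3/2) w123 + w12` and
`B₁ = 4 w12² − 3 w123²`; i.e. the convergence rate to the synchronous state is
`λ_Synch = A₁ − √(max B₁ 0) / 2`. -/
theorem synch_rate_G1_3 (w123 w12 : ℝ) (h123 : 0 < w123) (h12 : 0 < w12) :
    ∀ μ ∈ spectrum ℂ
      (!![(w123 + w12 : ℂ), -w12, -w123;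
          -w123 - w12, w123 + w12, 0;
          0, -w123, w123] : Matrix (Fin 3) (Fin 3) ℂ),
      μ ≠ 0 →
        (3 / 2 * w123 + w12) - 1 / 2 * Real.sqrt (max (4 * w12 ^ 2 - 3 * w123 ^ 2) 0) ≤
          μ.re := by
  intro μ hμ hne
  rw [spectrum.mem_iff] at hμ
  have hdet : ((algebraMap ℂ (Matrix (Fin 3) (Fin 3) ℂ)) μ -
      !![(w123 + w12 : ℂ), -w12, -w123;
          -w123 - w12, w123 + w12, 0;
          0, -w123, w123]).det = 0 := by
    by_contra h
    exact hμ ((Matrix.isUnit_iff_isUnit_det _).mpr (Ne.isUnit h))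
  have h1 : μ * (μ ^ 2 - (3 * (w123:ℂ) + 2 * w12) * μ
      + (3 * w123 ^ 2 + 3 * w123 * w12)) = 0 := by
    rw [← hdet]
    simp [Matrix.det_fin_three, Matrix.algebraMap_eq_diagonal, Matrix.sub_apply,
      Matrix.diagonal_apply]
    ring
  have hq : μ ^ 2 - (3 * (w123:ℂ) + 2 * w12) * μ
      + (3 * w123 ^ 2 + 3 * w123 * w12) = 0 := by
    rcases mul_eq_zero.mp h1 with h | h
    · exact absurd h hne
    · exact h
  set x := μ.re with hx
  set y := μ.im with hy
  have hre : x ^ 2 - y ^ 2 - (3 * w123 + 2 * w12) * x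
      + (3 * w123 ^ 2 + 3 * w123 * w12) = 0 := by
    have := congrArg Complex.re hq
    simpa [pow_two, Complex.mul_re, Complex.mul_im, Complex.add_re, Complex.sub_re] using this
  have him : 2 * x * y - (3 * w123 + 2 * w12) * y = 0 := by
    have := congrArg Complex.im hq
    simp [pow_two, Complex.mul_re, Complex.mul_im, Complex.add_im, Complex.sub_im] at this
    linarith
  set s := Real.sqrt (max (4 * w12 ^ 2 - 3 * w123 ^ 2) 0) with hs
  have hs0 : 0 ≤ s := Real.sqrt_nonneg _
  have hs2 : s ^ 2 = max (4 * w12 ^ 2 - 3 * w123 ^ 2) 0 := Real.sq_sqrt (le_max_right _ _)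
  have hsB : 4 * w12 ^ 2 - 3 * w123 ^ 2 ≤ s ^ 2 := hs2 ▸ le_max_left _ _
  rcases mul_eq_zero.mp (show y * (2 * x - (3 * w123 + 2 * w12)) = 0 by linarith [him]) with
    h0 | h0
  · -- y = 0
    have hxeq : x ^ 2 - (3 * w123 + 2 * w12) * x + (3 * w123 ^ 2 + 3 * w123 * w12) = 0 := by
      nlinarith [hre]
    nlinarith [sq_nonneg (2 * ((3 / 2 * w123 + w12) - x) + s),
      sq_nonneg (2 * ((3 / 2 * w123 + w12) - x) - s)]
  · -- x = A₁
    have : x = 3 / 2 * w123 + w12 := by linarith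
    nlinarith
end

section
/- Let w123, w12 be nonnegative real numbers. Let L_U be the 3×3 complex matrix [[w123 + w12, −w12, −w123], [−w123 − w12, w123 + w12, 0], [0, −w123, w123]], and with d₁ = w12 + w123 let L₆ be the 6×6 complex matrix with rows [d₁, 0, −w123, −w12, 0, 0], [−w123, d₁, 0, 0, 0, −w12], [0, −w123, d₁, 0, −w12, 0], [−w12, 0, 0, d₁, 0, −w123], [0, 0, −w12, −w123, d₁, 0], [0, −w12, 0, 0, −w123, d₁]. Then every complex eigenvalue of L_U is also an eigenvalue of L₆ (the spectrum of L_U is contained in the spectrum of L₆). -/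
open Matrix

private lemma cons_val_five' {α : Type*} (x : α) (u : Fin 5 → α) :
    Matrix.vecCons x u 5 = u 4 := rfl

/-- Intertwining relation for `G₁(3)`: every complex eigenvalue of the Laplacian `L_U` of the
underlying graph (one directed 3-cycle with weight `w123 ≥ 0` and one transposition with
weight `w12 ≥ 0`) is also an eigenvalue of the Laplacian `L₆` of the six-vertex induced
graph. -/
theorem spectrum_inclusion_G1_3 (w123 w12 : ℝ) (h123 : 0 ≤ w123) (h12 : 0 ≤ w12) :
    spectrum ℂ
      (!![(w123 + w12 : ℂ), -w12, -w123;
          -w123 - w12, w123 + w12, 0;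
          0, -w123, w123] : Matrix (Fin 3) (Fin 3) ℂ) ⊆
    spectrum ℂ
      (!![(w12 + w123 : ℂ), 0, -w123, -w12, 0, 0;
          -w123, w12 + w123, 0, 0, 0, -w12;
          0, -w123, w12 + w123, 0, -w12, 0;
          -w12, 0, 0, w12 + w123, 0, -w123;
          0, 0, -w12, -w123, w12 + w123, 0;
          0, -w12, 0, 0, -w123, w12 + w123] : Matrix (Fin 6) (Fin 6) ℂ) := by
  intro μ hμ
  set LU : Matrix (Fin 3) (Fin 3) ℂ :=
    !![(w123 + w12 : ℂ), -w12, -w123;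
       -w123 - w12, w123 + w12, 0;
       0, -w123, w123] with hLU
  set L6 : Matrix (Fin 6) (Fin 6) ℂ :=
    !![(w12 + w123 : ℂ), 0, -w123, -w12, 0, 0;
       -w123, w12 + w123, 0, 0, 0, -w12;
       0, -w123, w12 + w123, 0, -w12, 0;
       -w12, 0, 0, w12 + w123, 0, -w123;
       0, 0, -w12, -w123, w12 + w123, 0;
       0, -w12, 0, 0, -w123, w12 + w123] with hL6
  set S : Matrix (Fin 6) (Fin 3) ℂ :=
    !![1, 0, 0; 0, 1, 0; 0, 0, 1; 0, 1, 0; 0, 0, 1; 1, 0, 0] with hS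
  have key : L6 * S = S * LU := by
    ext i j
    fin_cases i <;> fin_cases j <;>
      simp [hLU, hL6, hS, Matrix.mul_apply, Fin.sum_univ_succ, cons_val_five'] <;> ring
  rw [spectrum.mem_iff] at hμ ⊢
  rw [Matrix.isUnit_iff_isUnit_det, isUnit_iff_ne_zero, not_ne_iff,
    ← Matrix.exists_mulVec_eq_zero_iff] at hμ
  obtain ⟨v, hv, hveq⟩ := hμ
  rw [Matrix.isUnit_iff_isUnit_det, isUnit_iff_ne_zero, not_ne_iff,
    ← Matrix.exists_mulVec_eq_zero_iff]
  refine ⟨S *ᵥ v, ?_, ?_⟩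
  · intro h
    apply hv
    have h0 := congrFun h 0
    have h1 := congrFun h 1
    have h2 := congrFun h 2
    simp [hS, Matrix.mulVec, dotProduct, Fin.sum_univ_succ] at h0 h1 h2
    funext j
    fin_cases j <;> simpa using ‹_›
  · have key2 : (algebraMap ℂ (Matrix (Fin 6) (Fin 6) ℂ) μ - L6) * S
        = S * (algebraMap ℂ (Matrix (Fin 3) (Fin 3) ℂ) μ - LU) := by
      rw [Algebra.algebraMap_eq_smul_one, Algebra.algebraMap_eq_smul_one,
        Matrix.sub_mul, Matrix.mul_sub, key, Matrix.smul_mul, Matrix.mul_smul,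
        Matrix.one_mul, Matrix.mul_one]
    rw [Matrix.mulVec_mulVec, key2, ← Matrix.mulVec_mulVec, hveq, Matrix.mulVec_zero]
end

section
/- For nonnegative reals w123, w12, define λ_Synch(w123, w12) = (3/2)·w123 + w12 − (1/2)·Real.sqrt(max(4·w12² − 3·w123², 0)) and λ_Cons(w123, w12) = min(2·w12, λ_Synch(w123, w12)). If 3·w123 + 2·w12 ≤ 1, then λ_Cons(w123, w12) ≤ 2/5. Moreover λ_Cons(1/5, 1/5) = 2/5, so the optimal convergence rate to the consensus state over the topology G₁(3) under the weight budget 3·w123 + 2·w12 ≤ 1 equals 2/5 and is attained at w123 = w12 = 1/5. -/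
/-- The convergence rate to the synchronous state over `G₁(3)`:
`λ_Synch = (3/2) w123 + w12 − (1/2) √(max (4 w12² − 3 w123²) 0)`. -/
noncomputable def lambdaSynch (w123 w12 : ℝ) : ℝ :=
  3 / 2 * w123 + w12 - 1 / 2 * Real.sqrt (max (4 * w12 ^ 2 - 3 * w123 ^ 2) 0)

/-- The convergence rate to the consensus state over `G₁(3)`:
`λ_Cons = min (2 w12) λ_Synch`. -/
noncomputable def lambdaCons (w123 w12 : ℝ) : ℝ :=
  min (2 * w12) (lambdaSynch w123 w12)

/-- Under the weight budget `3 w123 + 2 w12 ≤ 1`, the convergence rate to the consensus state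
over the topology `G₁(3)` is at most `2/5`, and the value `2/5` is attained at
`w123 = w12 = 1/5`; hence the optimal consensus convergence rate is `2/5`. -/
theorem optimal_consensus_rate_G1_3 :
    (∀ w123 w12 : ℝ, 0 ≤ w123 → 0 ≤ w12 → 3 * w123 + 2 * w12 ≤ 1 →
        lambdaCons w123 w12 ≤ 2 / 5) ∧
      lambdaCons (1 / 5) (1 / 5) = 2 / 5 := by
  constructor
  · intro w123 w12 h1 h2 h3
    rcases le_or_gt w12 (1/5) with hc | hc
    · exact le_trans (min_le_left _ _) (by linarith)
    · refine le_trans (min_le_right _ _) ?_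
      have hw : w123 ≤ 1/5 := by linarith
      have hsq : w12 ≤ Real.sqrt (max (4 * w12 ^ 2 - 3 * w123 ^ 2) 0) := by
        have hm : w12 ^ 2 ≤ max (4 * w12 ^ 2 - 3 * w123 ^ 2) 0 := by
          refine le_max_of_le_left ?_
          nlinarith
        calc w12 = Real.sqrt (w12 ^ 2) := (Real.sqrt_sq h2).symm
          _ ≤ _ := Real.sqrt_le_sqrt hm
      unfold lambdaSynch
      nlinarith
  · have h : Real.sqrt (max (4 * (1/5:ℝ) ^ 2 - 3 * (1/5:ℝ) ^ 2) 0) = 1/5 := by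
      have hm : max (4 * (1/5:ℝ) ^ 2 - 3 * (1/5:ℝ) ^ 2) 0 = (1/5:ℝ)^2 := by norm_num
      rw [hm, Real.sqrt_sq] ; norm_num
    unfold lambdaCons lambdaSynch
    rw [h]; norm_num
end

section
/- (Failure of the Aldous property for G₂(3).) Let w, w12 be strictly positive reals with 3·w > 2·w12. Let L₃ be the 3×3 matrix [[2·w + w12, −w − w12, −w], [−w − w12, 2·w + w12, −w], [−w, −w, 2·w]] and, with d₂ = 2·w + w12, let L₆ be the 6×6 matrix with rows [d₂, −w, −w, −w12, 0, 0], [−w, d₂, −w, 0, 0, −w12], [−w, −w, d₂, 0, −w12, 0], [−w12, 0, 0, d₂, −w, −w], [0, 0, −w12, −w, d₂, −w], [0, −w12, 0, −w, −w, d₂]. Then 2·w12 is an eigenvalue of L₆, and every nonzero eigenvalue of L₃ is strictly greater than 2·w12; consequently the second smallest eigenvalue of L₆ is strictly less than the second smallest eigenvalue of L₃ (so the convergence rate to the consensus state, λ_Cons = 2·w12, is strictly smaller than the convergence rate to the synchronous state, λ_Synch = 3·w). -/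
open Matrix

lemma mem_spectrum_iff_det' {n : ℕ} (M : Matrix (Fin n) (Fin n) ℝ) (μ : ℝ) :
    μ ∈ spectrum ℝ M ↔ (Matrix.diagonal (fun _ => μ) - M).det = 0 := by
  rw [spectrum.mem_iff, Matrix.algebraMap_eq_diagonal]
  have : (algebraMap ℝ (Fin n → ℝ)) μ = fun _ => μ := rfl
  rw [this, Matrix.isUnit_iff_isUnit_det, isUnit_iff_ne_zero, not_not]

/-- Failure of the Aldous property for `G₂(3)` with `w123 = w321 = w` and `3w > 2 w12`:
`2 w12` is an eigenvalue of the induced-graph Laplacian `L₆`, every nonzero eigenvalue of the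
underlying Laplacian `L₃` is strictly greater than `2 w12`, and consequently the smallest
nonzero eigenvalue of `L₆` (the second smallest eigenvalue, i.e. `λ_Cons = 2 w12`) is strictly
smaller than the smallest nonzero eigenvalue of `L₃` (i.e. `λ_Synch = 3 w`). -/
theorem aldous_fails_G2_3 (w w12 : ℝ) (hw : 0 < w) (hw12 : 0 < w12) (h : 2 * w12 < 3 * w)
    (L₃ : Matrix (Fin 3) (Fin 3) ℝ) (L₆ : Matrix (Fin 6) (Fin 6) ℝ)
    (hL₃ : L₃ = !![2 * w + w12, -w - w12, -w;
                   -w - w12, 2 * w + w12, -w;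
                   -w, -w, 2 * w])
    (hL₆ : L₆ = !![2 * w + w12, -w, -w, -w12, 0, 0;
                   -w, 2 * w + w12, -w, 0, 0, -w12;
                   -w, -w, 2 * w + w12, 0, -w12, 0;
                   -w12, 0, 0, 2 * w + w12, -w, -w;
                   0, 0, -w12, -w, 2 * w + w12, -w;
                   0, -w12, 0, -w, -w, 2 * w + w12]) :
    2 * w12 ∈ spectrum ℝ L₆ ∧
      (∀ μ ∈ spectrum ℝ L₃, μ ≠ 0 → 2 * w12 < μ) ∧
      sInf {μ | μ ∈ spectrum ℝ L₆ ∧ μ ≠ 0} < sInf {μ | μ ∈ spectrum ℝ L₃ ∧ μ ≠ 0} := by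
  -- 2 w12 is an eigenvalue of L₆, via the eigenvector (1,1,1,-1,-1,-1)
  have h26 : 2 * w12 ∈ spectrum ℝ L₆ := by
    rw [mem_spectrum_iff_det', ← Matrix.exists_mulVec_eq_zero_iff]
    refine ⟨![1, 1, 1, -1, -1, -1], ?_, ?_⟩
    · intro hv
      have := congrFun hv 0
      norm_num at this
    · have e5 : ∀ {α : Type} (a b c d e f : α), ![a,b,c,d,e,f] 5 = f :=
        fun _ _ _ _ _ _ => rfl
      have v3 : ((3 : Fin 6) : ℕ) = 3 := rfl
      have v4 : ((4 : Fin 6) : ℕ) = 4 := rfl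
      have v5 : ((5 : Fin 6) : ℕ) = 5 := rfl
      funext i
      fin_cases i <;>
        simp [hL₆, Matrix.mulVec, dotProduct, Fin.sum_univ_succ, e5, v3, v4, v5,
          Matrix.diagonal, Matrix.sub_apply, -Matrix.cons_val'] <;> ring
  -- characteristic polynomial of L₃
  have key : ∀ μ : ℝ, (Matrix.diagonal (fun _ => μ) - L₃).det
      = μ * (μ - 3 * w) * (μ - (3 * w + 2 * w12)) := by
    intro μ
    have hM : Matrix.diagonal (fun _ => μ) - L₃
        = !![μ - (2 * w + w12), w + w12, w;
             w + w12, μ - (2 * w + w12), w;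
             w, w, μ - 2 * w] := by
      subst hL₃
      ext i j
      fin_cases i <;> fin_cases j <;>
        simp [Matrix.diagonal, Matrix.sub_apply] <;> ring
    rw [hM, Matrix.det_fin_three]
    simp
    ring
  have spec3 : ∀ μ ∈ spectrum ℝ L₃, μ = 0 ∨ μ = 3 * w ∨ μ = 3 * w + 2 * w12 := by
    intro μ hμ
    rw [mem_spectrum_iff_det', key] at hμ
    rcases mul_eq_zero.mp hμ with h1 | h1
    · rcases mul_eq_zero.mp h1 with h2 | h2
      · exact Or.inl h2
      · exact Or.inr (Or.inl (by linarith))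
    · exact Or.inr (Or.inr (by linarith))
  have part2 : ∀ μ ∈ spectrum ℝ L₃, μ ≠ 0 → 2 * w12 < μ := by
    intro μ hμ hne
    rcases spec3 μ hμ with h1 | h1 | h1
    · exact absurd h1 hne
    · linarith
    · linarith
  refine ⟨h26, part2, ?_⟩
  have h3w : (3 : ℝ) * w ∈ spectrum ℝ L₃ := by
    rw [mem_spectrum_iff_det', key]; ring
  have hbdd : BddBelow {μ | μ ∈ spectrum ℝ L₆ ∧ μ ≠ 0} :=
    (Set.Finite.subset (Matrix.finite_spectrum L₆) (fun x hx => hx.1)).bddBelow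
  have hle : sInf {μ | μ ∈ spectrum ℝ L₆ ∧ μ ≠ 0} ≤ 2 * w12 :=
    csInf_le hbdd ⟨h26, by positivity⟩
  have hge : 3 * w ≤ sInf {μ | μ ∈ spectrum ℝ L₃ ∧ μ ≠ 0} := by
    have hne3 : (3 : ℝ) * w ≠ 0 := by positivity
    refine le_csInf ⟨3 * w, h3w, hne3⟩ ?_
    intro b hb
    rcases spec3 b hb.1 with h1 | h1 | h1
    · exact absurd h1 hb.2
    · linarith
    · linarith
  linarith
end

section
/- (Global optimum for the path topology G₃(3).) Let w12, w23 be nonnegative real numbers with 2·w12 + 2·w23 ≤ 1. Then (w12 + w23) − Real.sqrt(w12² − w12·w23 + w23²) ≤ 1/4, with equality if and only if w12 = w23 = 1/4. In particular, under the weight budget 2·w12 + 2·w23 ≤ 1, the maximal second smallest eigenvalue of the weighted Laplacian of the path graph on three vertices equals 1/4 and is attained exactly at w12 = w23 = 1/4. -/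
/-- Global optimum for the path topology `G₃(3)`: for nonnegative weights with budget
`2 w12 + 2 w23 ≤ 1`, the second smallest Laplacian eigenvalue
`(w12 + w23) − √(w12² − w12 w23 + w23²)` is at most `1/4`, with equality iff
`w12 = w23 = 1/4`. -/
theorem optimal_path3 (w12 w23 : ℝ) (h12 : 0 ≤ w12) (h23 : 0 ≤ w23)
    (hbudget : 2 * w12 + 2 * w23 ≤ 1) :
    (w12 + w23) - Real.sqrt (w12 ^ 2 - w12 * w23 + w23 ^ 2) ≤ 1 / 4 ∧
      ((w12 + w23) - Real.sqrt (w12 ^ 2 - w12 * w23 + w23 ^ 2) = 1 / 4 ↔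
        w12 = 1 / 4 ∧ w23 = 1 / 4) := by
  have hQ : 0 ≤ w12 ^ 2 - w12 * w23 + w23 ^ 2 := by nlinarith [sq_nonneg (w12 - w23)]
  have hs : 0 ≤ (w12 + w23) / 2 := by linarith
  have hkey : (w12 + w23) / 2 ≤ Real.sqrt (w12 ^ 2 - w12 * w23 + w23 ^ 2) := by
    rw [show (w12 + w23) / 2 = Real.sqrt (((w12 + w23) / 2) ^ 2) from (Real.sqrt_sq hs).symm]
    apply Real.sqrt_le_sqrt
    nlinarith [sq_nonneg (w12 - w23)]
  constructor
  · linarith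
  constructor
  · intro heq
    have hs2 : w12 + w23 = 1 / 2 := by linarith
    have hsq : Real.sqrt (w12 ^ 2 - w12 * w23 + w23 ^ 2) = 1 / 4 := by linarith
    have hQval : w12 ^ 2 - w12 * w23 + w23 ^ 2 = 1 / 16 := by
      have := Real.sq_sqrt hQ
      rw [hsq] at this
      nlinarith
    constructor <;> nlinarith [sq_nonneg (w12 - w23)]
  · rintro ⟨rfl, rfl⟩
    have : (1:ℝ) / 4 ^ 2 - 1 / 4 * (1 / 4) + (1 / 4) ^ 2 = (1/4)^2 := by norm_num
    rw [show (1:ℝ)/4 ^ 2 - 1/4 * (1/4) + (1/4)^2 = (1/4:ℝ)^2 by norm_num] at *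
    rw [show ((1:ℝ)/4) ^ 2 - 1/4 * (1/4) + (1/4)^2 = ((1:ℝ)/4)^2 by norm_num,
      Real.sqrt_sq (by norm_num : (0:ℝ) ≤ 1/4)]
    norm_num
end

section
/- Let w123, w12 be strictly positive reals with 3·w123 + 2·w12 = 1, and let L_U be the 3×3 complex matrix [[w123 + w12, −w12, −w123], [−w123 − w12, w123 + w12, 0], [0, −w123, w123]]. Then both nonzero complex eigenvalues of L_U have real part equal to 1/2 if and only if 4·w12² ≤ 3·w123²; otherwise (i.e. when 4·w12² > 3·w123²) both nonzero eigenvalues are real and the smaller one is strictly less than 1/2. Consequently, under the budget 3·w123 + 2·w12 = 1, the convergence rate to the synchronous state over G₁(3) equals its maximal value 1/2 exactly when 4·w12² ≤ 3·w123². -/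
open Matrix

/-- Under the budget `3 w123 + 2 w12 = 1`, both nonzero eigenvalues of the Laplacian of
`G₁(3)` have real part `1/2` (the maximal synchronisation rate) if and only if
`4 w12² ≤ 3 w123²`; otherwise all eigenvalues are real and some nonzero eigenvalue is
strictly less than `1/2`. -/
theorem max_synch_rate_G1_3 (w123 w12 : ℝ) (h123 : 0 < w123) (h12 : 0 < w12)
    (hbudget : 3 * w123 + 2 * w12 = 1)
    (L : Matrix (Fin 3) (Fin 3) ℂ)
    (hL : L = !![(w123 + w12 : ℂ), -w12, -w123;
                 -w123 - w12, w123 + w12, 0;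
                 0, -w123, w123]) :
    ((∀ μ ∈ spectrum ℂ L, μ ≠ 0 → μ.re = 1 / 2) ↔ 4 * w12 ^ 2 ≤ 3 * w123 ^ 2) ∧
      (3 * w123 ^ 2 < 4 * w12 ^ 2 →
        (∀ μ ∈ spectrum ℂ L, μ.im = 0) ∧
          ∃ μ ∈ spectrum ℂ L, μ ≠ 0 ∧ μ.re < 1 / 2) := by
  have hbC : (3 * (w123:ℂ) + 2 * w12) = 1 := by exact_mod_cast congrArg (Complex.ofReal) hbudget
  set cR : ℝ := 3 * w123 ^ 2 + 3 * w123 * w12 with hcR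
  have hc4 : 4 * cR = 1 - (4 * w12 ^ 2 - 3 * w123 ^ 2) := by nlinarith [hbudget]
  have key : ∀ μ : ℂ, μ ∈ spectrum ℂ L ↔ μ * (μ ^ 2 - μ + (cR : ℂ)) = 0 := by
    intro μ
    rw [spectrum.mem_iff, Matrix.isUnit_iff_isUnit_det, isUnit_iff_ne_zero, not_ne_iff]
    have hdet : (algebraMap ℂ (Matrix (Fin 3) (Fin 3) ℂ) μ - L).det
        = μ * (μ ^ 2 - μ + (cR : ℂ)) := by
      subst hL
      rw [Algebra.algebraMap_eq_smul_one]
      simp [Matrix.det_fin_three, Matrix.sub_apply, Matrix.smul_apply, Matrix.one_apply, hcR]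
      linear_combination (-(μ ^ 2)) * hbC
    rw [hdet]
  -- extract real/imaginary equations from the quadratic factor
  have quad : ∀ μ : ℂ, μ ^ 2 - μ + (cR : ℂ) = 0 →
      (μ.re * μ.re - μ.im * μ.im - μ.re + cR = 0 ∧ μ.im * (2 * μ.re - 1) = 0) := by
    intro μ hq
    rw [Complex.ext_iff] at hq
    simp [pow_two, Complex.mul_re, Complex.mul_im] at hq
    obtain ⟨h1, h2⟩ := hq
    constructor
    · linarith
    · linarith
  have hblt1 : 4 * w12 ^ 2 - 3 * w123 ^ 2 < 1 := by nlinarith [hbudget]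
  -- candidate small eigenvalue when b > 0
  have small : 3 * w123 ^ 2 < 4 * w12 ^ 2 →
      ∃ μ ∈ spectrum ℂ L, μ ≠ 0 ∧ μ.re < 1 / 2 := by
    intro hb
    set b : ℝ := 4 * w12 ^ 2 - 3 * w123 ^ 2 with hbdef
    have hbpos : 0 < b := by rw [hbdef]; linarith
    set s : ℝ := Real.sqrt b with hs
    have hs2 : s ^ 2 = b := Real.sq_sqrt hbpos.le
    have hspos : 0 < s := Real.sqrt_pos.mpr hbpos
    have hslt1 : s < 1 := by nlinarith [hs2, Real.sqrt_nonneg b]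
    refine ⟨(((1 - s) / 2 : ℝ) : ℂ), ?_, ?_, ?_⟩
    · rw [key]
      have : ((1 - s) / 2) ^ 2 - (1 - s) / 2 + cR = 0 := by nlinarith [hs2, hc4]
      have h2 : ((((1 - s) / 2 : ℝ) : ℂ)) ^ 2 - (((1 - s) / 2 : ℝ) : ℂ) + (cR : ℂ) = 0 := by
        exact_mod_cast congrArg (Complex.ofReal) this
      rw [h2, mul_zero]
    · simp only [ne_eq, Complex.ofReal_eq_zero]
      intro h0
      nlinarith
    · simp only [Complex.ofReal_re]
      linarith
  constructor
  · constructor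
    · intro hall
      by_contra hlt
      push_neg at hlt
      obtain ⟨μ, hmem, hne, hre⟩ := small hlt
      have := hall μ hmem hne
      linarith
    · intro hb μ hmem hne
      rw [key] at hmem
      rcases mul_eq_zero.mp hmem with h0 | hq
      · exact absurd h0 hne
      · obtain ⟨h1, h2⟩ := quad μ hq
        rcases mul_eq_zero.mp h2 with hy | hx
        · -- μ real: (x - 1/2)^2 = b/4 ≤ 0
          rw [hy] at h1
          nlinarith [sq_nonneg (μ.re - 1 / 2), hc4]
        · linarith
  · intro hb
    refine ⟨?_, small hb⟩
    intro μ hmem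
    rw [key] at hmem
    rcases mul_eq_zero.mp hmem with h0 | hq
    · rw [h0]; rfl
    · obtain ⟨h1, h2⟩ := quad μ hq
      rcases mul_eq_zero.mp h2 with hy | hx
      · exact hy
      · exfalso
        have hx' : μ.re = 1 / 2 := by linarith
        rw [hx'] at h1
        nlinarith [sq_nonneg μ.im, hc4]
end
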